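/- For every k ≥ 1 and every permutation π of {1,…,k}, the total degree of the rectangular Stanley sum S_π(p,q) as a polynomial in p and q is at most k + κ(π). -/

import Mathlib

open Equiv MvPolynomial

/-- The orbit of `x` under the permutation `σ`. -/
def permOrbit {k : ℕ} (σ : Equiv.Perm (Fin k)) (x : Fin k) : Set (Fin k) :=
  {y | ∃ n : ℤ, (σ ^ n) x = y}

/-- The set of orbits of a permutation (fixed points count as singleton orbits). -/
def permOrbits {k : ℕ} (σ : Equiv.Perm (Fin k)) : Set (Set (Fin k)) :=
  Set.range (permOrbit σ)

/-- `κ(σ)`: the number of orbits (cycles, counting fixed points) of `σ`. -/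
noncomputable def kappa {k : ℕ} (σ : Equiv.Perm (Fin k)) : ℕ :=
  Nat.card (permOrbits σ)

/-- The rectangular Stanley sum
`S_π(p,q) = Σ_{σ₁σ₂ = π} sgn(σ₁) q^{κ(σ₁)} p^{κ(σ₂)}` in `ℤ[p,q]`,
where `p = X 0` and `q = X 1`. -/
noncomputable def stanleySum (k : ℕ) (π : Equiv.Perm (Fin k)) : MvPolynomial (Fin 2) ℤ :=
  ∑ σ₁ : Equiv.Perm (Fin k), ∑ σ₂ : Equiv.Perm (Fin k),
    if σ₁ * σ₂ = π then
      C ((Equiv.Perm.sign σ₁ : ℤ)) * X 1 ^ kappa σ₁ * X 0 ^ kappa σ₂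
    else 0

namespace StanleyAux

variable {k : ℕ}

/-- The orbit equivalence relation of a permutation. -/
def orbitSetoid (σ : Equiv.Perm (Fin k)) : Setoid (Fin k) where
  r x y := ∃ n : ℤ, (σ ^ n) x = y
  iseqv := by
    refine ⟨fun x => ⟨0, rfl⟩, ?_, ?_⟩
    · rintro x y ⟨n, rfl⟩
      exact ⟨-n, by simp [← Equiv.Perm.mul_apply, ← zpow_add]⟩
    · rintro x y z ⟨n, rfl⟩ ⟨m, rfl⟩
      exact ⟨m + n, by rw [zpow_add, Equiv.Perm.mul_apply]⟩

lemma permOrbit_eq_of_rel {σ : Equiv.Perm (Fin k)} {x y : Fin k}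
    (h : (orbitSetoid σ).r x y) : permOrbit σ x = permOrbit σ y := by
  obtain ⟨n, rfl⟩ := h
  ext z
  constructor
  · rintro ⟨m, rfl⟩
    exact ⟨m - n, by rw [← Equiv.Perm.mul_apply, ← zpow_add, sub_add_cancel]⟩
  · rintro ⟨m, rfl⟩
    exact ⟨m + n, by rw [zpow_add, Equiv.Perm.mul_apply]⟩

lemma kappa_eq_card_quotient (σ : Equiv.Perm (Fin k)) :
    kappa σ = Nat.card (Quotient (orbitSetoid σ)) := by
  have hinj : Function.Injective
      (Quotient.lift (permOrbit σ) fun a b h => permOrbit_eq_of_rel h) := by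
    intro a b
    induction a using Quotient.inductionOn with | h x =>
    induction b using Quotient.inductionOn with | h y =>
    intro h
    refine Quot.sound ?_
    have hy : y ∈ permOrbit σ y := ⟨0, rfl⟩
    have h' : permOrbit σ x = permOrbit σ y := h
    show y ∈ permOrbit σ x
    exact h'.symm ▸ hy
  have : permOrbits σ =
      Set.range (Quotient.lift (permOrbit σ) fun a b h => permOrbit_eq_of_rel h) := by
    ext S
    constructor
    · rintro ⟨x, rfl⟩
      exact ⟨Quotient.mk (orbitSetoid σ) x, rfl⟩
    · rintro ⟨q, rfl⟩
      induction q using Quotient.inductionOn with | h x =>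
      exact ⟨x, rfl⟩
  rw [kappa, this]
  exact (Nat.card_congr (Equiv.ofInjective _ hinj)).symm

/-- The fixed subspace of a permutation acting on functions. -/
def fixSubmodule (σ : Equiv.Perm (Fin k)) : Submodule ℚ (Fin k → ℚ) where
  carrier := {f | ∀ x, f (σ x) = f x}
  add_mem' := by intro f g hf hg x; simp [hf x, hg x]
  zero_mem' := by intro x; rfl
  smul_mem' := by intro c f hf x; simp [hf x]

lemma fix_zpow {σ : Equiv.Perm (Fin k)} {f : Fin k → ℚ} (hf : ∀ x, f (σ x) = f x) :
    ∀ (n : ℤ) (x : Fin k), f ((σ ^ n) x) = f x := by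
  have hinv : ∀ x, f (σ⁻¹ x) = f x := by
    intro x
    simpa using (hf (σ⁻¹ x)).symm
  intro n
  induction n using Int.induction_on with
  | zero => simp
  | succ m ih =>
      intro x
      have : (σ ^ ((m : ℤ) + 1)) x = (σ ^ (m : ℤ)) (σ x) := by
        rw [zpow_add, zpow_one, Equiv.Perm.mul_apply]
      rw [this, ih, hf]
  | pred m ih =>
      intro x
      have : (σ ^ (-(m : ℤ) - 1)) x = (σ ^ (-(m : ℤ))) (σ⁻¹ x) := by
        rw [sub_eq_add_neg, zpow_add, Equiv.Perm.mul_apply, zpow_neg_one]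
      rw [this, ih, hinv]

/-- Functions on the orbit quotient are linearly equivalent to the fixed subspace. -/
noncomputable def fixEquiv (σ : Equiv.Perm (Fin k)) :
    (Quotient (orbitSetoid σ) → ℚ) ≃ₗ[ℚ] fixSubmodule σ where
  toFun g := ⟨g ∘ Quotient.mk _, by
    intro x
    show g (Quotient.mk _ (σ x)) = g (Quotient.mk _ x)
    congr 1
    have hr : (orbitSetoid σ).r x (σ x) := ⟨1, by rw [zpow_one]⟩
    exact (Quot.sound hr).symm⟩
  map_add' g h := rfl
  map_smul' c g := rfl
  invFun f := Quotient.lift f.1 (fun a b h => by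
    obtain ⟨n, rfl⟩ := (h : ∃ n : ℤ, (σ ^ n) a = b)
    exact (fix_zpow f.2 n a).symm)
  left_inv g := by
    funext q
    induction q using Quotient.inductionOn with | h x => rfl
  right_inv f := by
    apply Subtype.ext
    funext x
    rfl

lemma kappa_eq_finrank (σ : Equiv.Perm (Fin k)) :
    kappa σ = Module.finrank ℚ (fixSubmodule σ) := by
  classical
  have : Fintype (Quotient (orbitSetoid σ)) := Quotient.fintype _
  rw [← (fixEquiv σ).finrank_eq, Module.finrank_fintype_fun_eq_card,
    kappa_eq_card_quotient, Nat.card_eq_fintype_card]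

lemma kappa_mul_le (σ₁ σ₂ : Equiv.Perm (Fin k)) :
    kappa σ₁ + kappa σ₂ ≤ k + kappa (σ₁ * σ₂) := by
  have hle : fixSubmodule σ₁ ⊓ fixSubmodule σ₂ ≤ fixSubmodule (σ₁ * σ₂) := by
    rintro f ⟨h₁, h₂⟩ x
    show f (σ₁ (σ₂ x)) = f x
    rw [h₁ (σ₂ x), h₂ x]
  have h1 : Module.finrank ℚ (fixSubmodule σ₁) + Module.finrank ℚ (fixSubmodule σ₂)
      = Module.finrank ℚ ↥(fixSubmodule σ₁ ⊔ fixSubmodule σ₂)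
        + Module.finrank ℚ ↥(fixSubmodule σ₁ ⊓ fixSubmodule σ₂) :=
    (Submodule.finrank_sup_add_finrank_inf_eq _ _).symm
  have h2 : Module.finrank ℚ ↥(fixSubmodule σ₁ ⊔ fixSubmodule σ₂)
      ≤ Module.finrank ℚ (Fin k → ℚ) := Submodule.finrank_le _
  have h3 : Module.finrank ℚ ↥(fixSubmodule σ₁ ⊓ fixSubmodule σ₂)
      ≤ Module.finrank ℚ (fixSubmodule (σ₁ * σ₂)) := Submodule.finrank_mono hle
  have hk : Module.finrank ℚ (Fin k → ℚ) = k := by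
    rw [Module.finrank_fintype_fun_eq_card, Fintype.card_fin]
  rw [kappa_eq_finrank σ₁, kappa_eq_finrank σ₂, kappa_eq_finrank (σ₁ * σ₂)]
  omega

end StanleyAux

/-- The total degree of the rectangular Stanley sum `S_π(p,q)` is at most `k + κ(π)`. -/
theorem stanleySum_totalDegree_le (k : ℕ) (hk : 1 ≤ k) (π : Equiv.Perm (Fin k)) :
    (stanleySum k π).totalDegree ≤ k + kappa π := by
  refine (totalDegree_finset_sum _ _).trans ?_
  refine Finset.sup_le fun σ₁ _ => ?_
  refine (totalDegree_finset_sum _ _).trans ?_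
  refine Finset.sup_le fun σ₂ _ => ?_
  by_cases h : σ₁ * σ₂ = π
  · rw [if_pos h]
    have hbound : (C ((Equiv.Perm.sign σ₁ : ℤ)) * X 1 ^ kappa σ₁ * X 0 ^ kappa σ₂ :
        MvPolynomial (Fin 2) ℤ).totalDegree ≤ kappa σ₁ + kappa σ₂ := by
      refine (totalDegree_mul _ _).trans ?_
      have h1 : (C ((Equiv.Perm.sign σ₁ : ℤ)) * X 1 ^ kappa σ₁ :
          MvPolynomial (Fin 2) ℤ).totalDegree ≤ kappa σ₁ := by
        refine (totalDegree_mul _ _).trans ?_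
        rw [totalDegree_C, totalDegree_X_pow]
        simp
      have h2 : (X 0 ^ kappa σ₂ : MvPolynomial (Fin 2) ℤ).totalDegree ≤ kappa σ₂ := by
        rw [totalDegree_X_pow]
      omega
    refine hbound.trans ?_
    have := StanleyAux.kappa_mul_le σ₁ σ₂
    rw [h] at this
    exact this
  · simp [h]
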